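/- Let p be a prime, F a field of characteristic p, A a finite abelian p-group of exponent p^m, and G a finite group acting on A. Fix u ∈ A of order p^m, let 𝒪 be the orbit of u under G, and suppose p does not divide |𝒪|. Let a = |𝒪|·1 − ∑_{v ∈ 𝒪} v in the group algebra F[A]. Then with t = 1 + p + ⋯ + p^{m−1}, a^t ≠ 0 and a lies in the Jacobson radical of F[A]; consequently the Loewy length of the fixed-point subalgebra F[A]^G is at least (p^m + p − 2)/(p − 1). -/

import Mathlib

set_option synthInstance.maxHeartbeats 1000000
set_option maxHeartbeats 1000000
open MonoidAlgebra Finsupp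

universe u v

noncomputable instance maCharP (p : ℕ) [Fact p.Prime] (F : Type*) [Field F] [CharP F p]
    (A : Type*) [CommGroup A] : CharP (MonoidAlgebra F A) p :=
  charP_of_injective_algebraMap (R := F) (A := MonoidAlgebra F A)
    (by
      rw [MonoidAlgebra.coe_algebraMap]
      exact fun x y h => by simpa using congrArg (fun g => g.coeff 1) h) p

theorem core (p : ℕ) [Fact p.Prime] (F : Type v) [Field F] [CharP F p] (m : ℕ) (hm : 1 ≤ m) :
    ∀ (A : Type u) (_ : CommGroup A) (f : A →₀ F),
      (∀ v ∈ f.support, orderOf v = p ^ m) → (∀ x : A, x ^ p ^ m = 1) →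
      (f.sum fun _ c => c) ≠ 0 →
      ((f.sum fun _ c => c) • (1 : MonoidAlgebra F A) -
          (MonoidAlgebra.ofCoeff f)) ^ (∑ i ∈ Finset.range m, p ^ i) ≠ 0 := by
  induction m, hm using Nat.le_induction with
  | base =>
    intro A instA f hord hexp hsum
    simp only [Finset.range_one, Finset.sum_singleton, pow_zero, pow_one]
    intro h
    -- pick v0 in support
    have hf : f ≠ 0 := by
      rintro rfl
      simp at hsum
    obtain ⟨v₀, hv₀⟩ := Finsupp.support_nonempty_iff.mpr hf
    have hv₀ne : v₀ ≠ 1 := by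
      intro e
      have := hord v₀ hv₀
      rw [e, orderOf_one, pow_one] at this
      have hp := (Fact.out : p.Prime).one_lt
      omega
    have h1 : (f.sum fun _ c => c) • (1 : MonoidAlgebra F A) = MonoidAlgebra.ofCoeff f := sub_eq_zero.mp h
    rw [MonoidAlgebra.one_def, MonoidAlgebra.smul_single'] at h1
    have : v₀ ∈ (Finsupp.single (1 : A) ((f.sum fun _ c => c) * 1)).support := by
      rw [← MonoidAlgebra.coeff_single, h1]; exact hv₀
    have := Finsupp.support_single_subset this
    simp only [Finset.mem_singleton] at this
    exact hv₀ne this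
  | succ m hm ih =>
    intro A instA f hord hexp hsum
    classical
    have hp : p.Prime := Fact.out
    set S : F := f.sum fun _ c => c with hS
    set B : Subgroup A := (powMonoidHom p : A →* A).range with hB
    set φ : A →* B := (powMonoidHom p : A →* A).rangeRestrict with hφ
    have hzp : (0 : F) ^ p = 0 := zero_pow hp.ne_zero
    set f' : B →₀ F := Finsupp.mapDomain φ (f.mapRange (· ^ p) hzp) with hf'
    -- total sum of f'
    have hsum' : (f'.sum fun _ c => c) = S ^ p := by
      rw [hf', Finsupp.sum_mapDomain_index (fun _ => rfl) (fun _ _ _ => rfl),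
        Finsupp.sum_mapRange_index (fun _ => rfl)]
      rw [hS, Finsupp.sum, Finsupp.sum, sum_pow_char]
    -- orders in f'.support
    have hord' : ∀ w ∈ f'.support, orderOf w = p ^ m := by
      intro w hw
      have hw2 : w ∈ ((f.mapRange (· ^ p) hzp).support).image φ := by
        exact Finsupp.mapDomain_support hw
      obtain ⟨v, hv, rfl⟩ := Finset.mem_image.mp hw2
      have hv2 : v ∈ f.support := Finsupp.support_mapRange hv
      have : orderOf (φ v) = orderOf ((φ v : A)) :=
        (orderOf_injective B.subtype Subtype.coe_injective (φ v)).symm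
      rw [this]
      have hcoe : ((φ v : A)) = v ^ p := (powMonoidHom p).coe_rangeRestrict v
      rw [hcoe, orderOf_pow' v hp.ne_zero, hord v hv2, pow_succ,
        Nat.gcd_eq_right (dvd_mul_left p (p ^ m)), Nat.mul_div_cancel _ hp.pos]
    -- exponent of B
    have hexp' : ∀ x : B, x ^ p ^ m = 1 := by
      intro x
      obtain ⟨y, hy⟩ := x.2
      have : ((x ^ p ^ m : B) : A) = 1 := by
        push_cast
        have : (x : A) = y ^ p := hy.symm
        rw [this, ← pow_mul, ← pow_succ', hexp]
      exact Subtype.coe_injective (by simpa using this)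
    have hSne : S ≠ 0 := hsum
    have hsum'' : (f'.sum fun _ c => c) ≠ 0 := by
      rw [hsum']; exact pow_ne_zero _ hSne
    -- IH
    have hb := ih B inferInstance f' hord' hexp' hsum''
    set T : ℕ := ∑ i ∈ Finset.range m, p ^ i with hT
    set b : MonoidAlgebra F B :=
      ((f'.sum fun _ c => c) • (1 : MonoidAlgebra F B) - (MonoidAlgebra.ofCoeff f')) ^ T
      with hb_def
    -- the embedding
    set Φ : MonoidAlgebra F B →+* MonoidAlgebra F A :=
      MonoidAlgebra.mapDomainRingHom F B.subtype with hΦ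
    have hΦapply : ∀ x : MonoidAlgebra F B, Φ x =
        MonoidAlgebra.ofCoeff (Finsupp.mapDomain (B.subtype) x.coeff) :=
      fun x => rfl
    have hΦinj : Function.Injective Φ := by
      intro x y hxy
      rw [hΦapply, hΦapply] at hxy
      exact MonoidAlgebra.coeff_injective
        (Finsupp.mapDomain_injective Subtype.coe_injective (MonoidAlgebra.ofCoeff_injective hxy))
    -- key: Φ (S' • 1 - f') = a ^ p
    have hkey : Φ ((f'.sum fun _ c => c) • (1 : MonoidAlgebra F B) -
        (MonoidAlgebra.ofCoeff f')) =
        (S • (1 : MonoidAlgebra F A) - (MonoidAlgebra.ofCoeff f)) ^ p := by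
      rw [map_sub]
      have h1 : Φ ((f'.sum fun _ c => c) • (1 : MonoidAlgebra F B)) =
          MonoidAlgebra.single (1 : A) (S ^ p) := by
        rw [hsum', MonoidAlgebra.one_def, MonoidAlgebra.smul_single', hΦapply,
          MonoidAlgebra.coeff_single, Finsupp.mapDomain_single]
        simp
      have h2 : Φ (MonoidAlgebra.ofCoeff f') =
          f.sum fun v c => MonoidAlgebra.single (v ^ p) (c ^ p) := by
        rw [hΦapply, MonoidAlgebra.coeff_ofCoeff, hf', ← Finsupp.mapDomain_comp,
          Finsupp.mapDomain, Finsupp.sum_mapRange_index (fun _ => by simp),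
          MonoidAlgebra.ofCoeff_finsuppSum]
        rfl
      have h3 : (S • (1 : MonoidAlgebra F A) - (MonoidAlgebra.ofCoeff f)) ^ p =
          MonoidAlgebra.single (1 : A) (S ^ p) -
            f.sum fun v c => MonoidAlgebra.single (v ^ p) (c ^ p) := by
        rw [sub_pow_char]
        congr 1
        · rw [MonoidAlgebra.one_def, MonoidAlgebra.smul_single', mul_one,
            MonoidAlgebra.single_pow, one_pow]
        · have hfs : (MonoidAlgebra.ofCoeff f) =
              f.sum fun v c => MonoidAlgebra.single v c := by
              conv_lhs => rw [← Finsupp.sum_single f]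
              rw [MonoidAlgebra.ofCoeff_finsuppSum]
              rfl
          rw [hfs, Finsupp.sum, Finsupp.sum, sum_pow_char]
          exact Finset.sum_congr rfl fun v _ => MonoidAlgebra.single_pow _ _ p
      rw [h1, h2, h3]
    -- power decomposition
    have hTsucc : (∑ i ∈ Finset.range (m + 1), p ^ i) = T * p + 1 := by
      rw [hT, Finset.sum_mul, Finset.sum_range_succ']
      simp [pow_succ]
    set a : MonoidAlgebra F A := S • (1 : MonoidAlgebra F A) - (MonoidAlgebra.ofCoeff f)
      with ha_def
    have hsplit : a ^ (∑ i ∈ Finset.range (m + 1), p ^ i) = (a ^ p) ^ T * a := by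
      rw [hTsucc, pow_add, pow_one, pow_mul']
    set c : MonoidAlgebra F A := (a ^ p) ^ T with hc_def
    have hcΦ : c = Φ b := by
      rw [hb_def, map_pow, hkey]
    have hcne : c ≠ 0 := by
      rw [hcΦ]
      intro h0
      exact hb (hΦinj (by rw [h0, map_zero]))
    have hcsupp : ∀ w ∈ c.coeff.support, w ∈ B := by
      intro w hw
      rw [hcΦ, hΦapply, MonoidAlgebra.coeff_ofCoeff] at hw
      have := Finsupp.mapDomain_support hw
      obtain ⟨x, _, rfl⟩ := Finset.mem_image.mp this
      exact x.2
    -- final step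
    rw [hsplit]
    intro h0
    have h0' : a * c = 0 := by rw [mul_comm]; exact h0
    have hrw : a * c = S • c - (MonoidAlgebra.ofCoeff f) * c := by
      rw [ha_def, sub_mul, smul_mul_assoc, one_mul]
    have hmul : S • c = (MonoidAlgebra.ofCoeff f) * c := by
      rw [hrw] at h0'
      exact sub_eq_zero.mp h0'
    obtain ⟨w₀, hw₀⟩ := Finsupp.support_nonempty_iff.mpr
      (MonoidAlgebra.coeff_eq_zero.not.mpr hcne)
    have hw₀B : w₀ ∈ B := hcsupp w₀ hw₀
    have hleft : (S • c).coeff w₀ ≠ 0 := by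
      rw [MonoidAlgebra.coeff_smul, Finsupp.smul_apply, smul_eq_mul]
      exact mul_ne_zero hSne (Finsupp.mem_support_iff.mp hw₀)
    have hw₀mem : w₀ ∈ ((MonoidAlgebra.ofCoeff f) * c).coeff.support := by
      rw [← hmul]
      exact Finsupp.mem_support_iff.mpr hleft
    have := MonoidAlgebra.support_coeff_mul_subset (MonoidAlgebra.ofCoeff f) c hw₀mem
    rw [Finset.mem_mul] at this
    obtain ⟨v, hv, w, hw, hvw⟩ := this
    have hwB : w ∈ B := hcsupp w hw
    have hvB : v ∈ B := by
      have : v = w₀ * w⁻¹ := by rw [← hvw]; group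
      rw [this]
      exact mul_mem hw₀B (inv_mem hwB)
    obtain ⟨y, hy⟩ := hvB
    have hvord : v ^ p ^ m = 1 := by
      rw [← hy]
      show (y ^ p) ^ p ^ m = 1
      rw [← pow_mul, ← pow_succ', hexp]
    have hdvd : orderOf v ∣ p ^ m := orderOf_dvd_of_pow_eq_one hvord
    rw [hord v hv] at hdvd
    have h1 := Nat.le_of_dvd (Nat.pow_pos hp.pos) hdvd
    have h2 : p ^ m < p ^ (m + 1) := Nat.pow_lt_pow_succ hp.one_lt
    omega

/-- Theorem 4 of the paper: if `A` is a finite abelian `p`-group of exponent `p^m`, `G` acts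
on `A`, `u ∈ A` has order `p^m` and its orbit `𝒪` has size prime to `p`, then
`a = |𝒪|·1 - ∑_{v ∈ 𝒪} v` lies in the Jacobson radical of `F[A]`, satisfies `a^t ≠ 0` for
`t = 1 + p + ⋯ + p^{m-1}`, and hence the Loewy length of `F[A]^G` is at least
`(p^m + p - 2)/(p - 1)`. -/
theorem stmt_6 (p m : ℕ) [Fact p.Prime] (hm : 1 ≤ m) (F : Type*) [Field F] [CharP F p]
    (A : Type*) [CommGroup A] [Fintype A] (hexp : Monoid.exponent A = p ^ m)
    (G : Type*) [Group G] [Finite G] [MulDistribMulAction G A]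
    (u : A) (hu : orderOf u = p ^ m)
    (O : Finset A) (hO : ↑O = MulAction.orbit G u)
    (horb : ¬ p ∣ O.card)
    (a : MonoidAlgebra F A)
    (ha : a = (O.card : F) • (1 : MonoidAlgebra F A) - ∑ v ∈ O, MonoidAlgebra.of F A v)
    (t : ℕ) (ht : t = ∑ i ∈ Finset.range m, p ^ i)
    (S : Subalgebra F (MonoidAlgebra F A))
    (hS : S = ⨅ g : G, AlgHom.equalizer
        (MonoidAlgebra.mapDomainAlgHom F F (MulDistribMulAction.toMonoidHom A g))
        (AlgHom.id F (MonoidAlgebra F A))) :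
    a ^ t ≠ 0 ∧ a ∈ Ideal.jacobson (⊥ : Ideal (MonoidAlgebra F A)) ∧
    ∀ t' : ℕ, (Ideal.jacobson (⊥ : Ideal S)) ^ t' = ⊥ →
      (p ^ m + p - 2) / (p - 1) ≤ t' := by
  classical
  have hp : p.Prime := Fact.out
  -- global exponent fact
  have hexp' : ∀ x : A, x ^ p ^ m = 1 := fun x => by
    rw [← hexp]; exact Monoid.pow_exponent_eq_one x
  -- all orbit elements have order p ^ m
  have hordO : ∀ v ∈ O, orderOf v = p ^ m := by
    intro v hv
    have : v ∈ MulAction.orbit G u := by rw [← hO]; exact hv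
    obtain ⟨g, rfl⟩ := this
    show orderOf (g • u) = p ^ m
    have : g • u = MulDistribMulAction.toMonoidHom A g u := rfl
    rw [this, orderOf_injective (MulDistribMulAction.toMonoidHom A g)
      (MulAction.injective g) u, hu]
  -- the Finsupp representation
  set f : A →₀ F := ∑ v ∈ O, Finsupp.single v (1 : F) with hf
  have hfsum : ∀ s : Finset A, ((∑ v ∈ s, Finsupp.single v (1 : F)).sum fun _ c => c)
      = (s.card : F) := by
    intro s
    induction s using Finset.induction with
    | empty => simp
    | @insert x s hx ih =>
      rw [Finset.sum_insert hx, Finsupp.sum_add_index' (fun _ => rfl) (fun _ _ _ => rfl), ih,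
        Finsupp.sum_single_index rfl, Finset.card_insert_of_notMem hx]
      push_cast
      ring
  have hfsum' : (f.sum fun _ c => c) = (O.card : F) := hfsum O
  have hfsupp : ∀ v ∈ f.support, v ∈ O := by
    intro v hv
    obtain ⟨c, hc, hvc⟩ := Finsupp.mem_support_finset_sum v hv
    have := Finsupp.support_single_subset hvc
    simp only [Finset.mem_singleton] at this
    rwa [this]
  have hfMA : (MonoidAlgebra.ofCoeff f) = ∑ v ∈ O, MonoidAlgebra.of F A v := by
    rw [hf, MonoidAlgebra.ofCoeff_sum]
    rfl
  have hcard : (O.card : F) ≠ 0 := by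
    intro h
    exact horb ((CharP.cast_eq_zero_iff F p O.card).mp h)
  -- part 1
  have part1 : a ^ t ≠ 0 := by
    rw [ha, ht, ← hfMA, ← hfsum']
    exact core p F m hm A inferInstance f
      (fun v hv => hordO v (hfsupp v hv)) hexp' (by rw [hfsum']; exact hcard)
  -- a as a sum of nilpotents
  have hasum : a = ∑ v ∈ O, ((1 : MonoidAlgebra F A) - MonoidAlgebra.of F A v) := by
    rw [ha, Finset.sum_sub_distrib, Finset.sum_const, Nat.cast_smul_eq_nsmul]
  have hnil : IsNilpotent a := by
    rw [hasum]
    refine isNilpotent_sum fun v hv => ⟨p ^ m, ?_⟩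
    rw [sub_pow_char_pow, one_pow, ← map_pow, hexp' v, map_one, sub_self]
  have part2 : a ∈ Ideal.jacobson (⊥ : Ideal (MonoidAlgebra F A)) := by
    have h1 : a ∈ nilradical (MonoidAlgebra F A) := mem_nilradical.mpr hnil
    have h2 : nilradical (MonoidAlgebra F A) = Ideal.radical ⊥ := by
      rw [nilradical, Ideal.zero_eq_bot]
    rw [h2] at h1
    exact Ideal.radical_le_jacobson h1
  refine ⟨part1, part2, ?_⟩
  -- part 3
  intro t' hJ
  -- a is G-invariant
  have haS : a ∈ S := by
    rw [hS, Algebra.mem_iInf]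
    intro g
    rw [AlgHom.mem_equalizer]
    show MonoidAlgebra.mapDomainAlgHom F F (MulDistribMulAction.toMonoidHom A g) a = a
    rw [ha, map_sub, map_smul, map_one, map_sum]
    have hofmap : ∀ v : A,
        MonoidAlgebra.mapDomainAlgHom F F (MulDistribMulAction.toMonoidHom A g)
          (MonoidAlgebra.of F A v) = MonoidAlgebra.of F A (g • v) := by
      intro v
      show MonoidAlgebra.mapDomain _ (MonoidAlgebra.single v 1) = _
      rw [MonoidAlgebra.mapDomain_single, MulDistribMulAction.toMonoidHom_apply]
      rfl
    have hsum : ∑ v ∈ O, MonoidAlgebra.mapDomainAlgHom F F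
        (MulDistribMulAction.toMonoidHom A g) (MonoidAlgebra.of F A v)
        = ∑ v ∈ O, MonoidAlgebra.of F A v := by
      rw [Finset.sum_congr rfl fun v _ => hofmap v]
      refine Finset.sum_nbij' (fun v => g • v) (fun v => g⁻¹ • v) ?_ ?_ ?_ ?_ ?_
      · intro v hv
        have : v ∈ MulAction.orbit G u := by rw [← hO]; exact hv
        obtain ⟨h, rfl⟩ := this
        have : g • h • u ∈ MulAction.orbit G u := ⟨g * h, (mul_smul g h u)⟩
        rw [← hO] at this
        exact this
      · intro v hv
        have : v ∈ MulAction.orbit G u := by rw [← hO]; exact hv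
        obtain ⟨h, rfl⟩ := this
        have : g⁻¹ • h • u ∈ MulAction.orbit G u := ⟨g⁻¹ * h, (mul_smul g⁻¹ h u)⟩
        rw [← hO] at this
        exact this
      · intro v _; simp
      · intro v _; simp
      · intro v _; rfl
    rw [hsum]
  -- pass to the subalgebra
  set a' : S := ⟨a, haS⟩ with ha'
  have ha'nil : IsNilpotent a' := by
    obtain ⟨k, hk⟩ := hnil
    exact ⟨k, Subtype.ext (by rw [SubmonoidClass.coe_pow]; exact hk)⟩
  have ha'J : a' ∈ Ideal.jacobson (⊥ : Ideal S) := by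
    have h1 : a' ∈ nilradical S := mem_nilradical.mpr ha'nil
    have h2 : nilradical S = Ideal.radical ⊥ := by rw [nilradical, Ideal.zero_eq_bot]
    rw [h2] at h1
    exact Ideal.radical_le_jacobson h1
  have hpow : a' ^ t' = 0 := by
    have := Ideal.pow_mem_pow ha'J t'
    rw [hJ] at this
    exact (Submodule.mem_bot _).mp this
  have hat' : a ^ t' = 0 := by
    have := congrArg (Subtype.val) hpow
    rwa [SubmonoidClass.coe_pow] at this
  -- t' > t
  have htlt : t + 1 ≤ t' := by
    by_contra hcon
    push_neg at hcon
    have ht'le : t' ≤ t := by omega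
    have : a ^ t = 0 := by
      have : a ^ t = a ^ t' * a ^ (t - t') := by
        rw [← pow_add]
        congr 1
        omega
      rw [this, hat', zero_mul]
    exact part1 this
  -- arithmetic
  have hp2 : 2 ≤ p := hp.two_le
  have hppow : p ≤ p ^ m := Nat.le_self_pow (by omega) p
  have hgeom : ((p : ℤ) - 1) * (t : ℤ) = (p : ℤ) ^ m - 1 := by
    have := mul_geom_sum (p : ℤ) m
    rw [ht]
    push_cast
    rw [this]
  have harith : p ^ m + p - 2 = (p - 1) * (t + 1) := by
    have h1 : ((p ^ m + p - 2 : ℕ) : ℤ) = (p : ℤ) ^ m + p - 2 := by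
      have : (2 : ℕ) ≤ p ^ m + p := by omega
      push_cast [Nat.cast_sub this]
      ring
    have h2 : (((p - 1) * (t + 1) : ℕ) : ℤ) = ((p : ℤ) - 1) * (t + 1) := by
      push_cast [Nat.cast_sub (by omega : 1 ≤ p)]
      ring
    have h3 : ((p : ℤ) - 1) * (t + 1) = (p : ℤ) ^ m + p - 2 := by
      rw [mul_add, hgeom]
      ring
    have := h3 ▸ h2
    omega
  rw [harith, Nat.mul_div_cancel_left _ (by omega : 0 < p - 1)]
  exact htlt
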